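/- Let Σ = {A, C, G, T} be the DNA alphabet, let l ≥ 1, let d ≥ 1, and let a₁, …, a_d be strings of length l over the sub-alphabet {A, T}. Let s be the string a₁·C·a₂·C·⋯·C·a_d obtained by concatenating a₁, …, a_d with a single letter C inserted between consecutive blocks, and let e ∈ {C, G}. Then for every string w of length l over {A, T}, w is a contiguous substring (infix) of the extended string s·e (s with the single letter e appended) if and only if w ∈ {a₁, …, a_d}. In particular, appending an extension letter from {C, G} creates no new infixes over {A, T} of length l. -/

import Mathlib

/-- The DNA alphabet Σ = {A, C, G, T}. -/
inductive Base : Type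
  | A | C | G | T
  deriving DecidableEq

private lemma infix_split {α : Type*} {w x y : List α} {c : α} (hc : c ∉ w)
    (h : w <:+: x ++ c :: y) : w <:+: x ∨ w <:+: y := by
  induction x with
  | nil =>
    right
    obtain ⟨u, v, huv⟩ := h
    cases u with
    | nil =>
      cases w with
      | nil => exact List.nil_infix
      | cons b w' =>
        simp only [List.nil_append, List.cons_append, List.cons.injEq] at huv
        exact absurd ((List.mem_cons_self (a := b) (l := w'))) (huv.1 ▸ hc)
    | cons d u' =>
      simp only [List.cons_append, List.nil_append, List.cons.injEq] at huv
      exact ⟨u', v, huv.2⟩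
  | cons b x' ih =>
    rw [List.cons_append, List.infix_cons_iff] at h
    rcases h with hp | h
    · rcases le_or_gt w.length (b :: x').length with hle | hlt
      · exact Or.inl (List.prefix_of_prefix_length_le hp (List.prefix_append _ _) hle).isInfix
      · exfalso
        have hx : (b :: x') <+: w :=
          List.prefix_of_prefix_length_le (List.prefix_append _ _) hp hlt.le
        obtain ⟨t, ht⟩ := hx
        have ht' : (b :: x') ++ t <+: (b :: x') ++ c :: y := ht ▸ hp
        have htc : t <+: c :: y := (List.prefix_append_right_inj _).mp ht'
        cases t with
        | nil => subst ht; simp at hlt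
        | cons t0 t' =>
          rw [List.cons_prefix_cons] at htc
          apply hc
          rw [← ht, htc.1]
          simp
    · rcases ih h with h1 | h2
      · exact Or.inl (List.infix_cons h1)
      · exact Or.inr h2

private lemma key (l : ℕ) (hl : 1 ≤ l) (w : List Base) (hw : w.length = l)
    (e : Base) (heW : e ∉ w) (hCW : Base.C ∉ w) :
    ∀ as : List (List Base), as ≠ [] → (∀ a ∈ as, a.length = l) →
      (w <:+: List.intercalate [Base.C] as ++ [e] ↔ w ∈ as) := by
  intro as
  induction as with
  | nil => intro h; exact absurd rfl h
  | cons a as' ih =>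
    intro _ hlens
    cases as' with
    | nil =>
      have hone : List.intercalate [Base.C] [a] = a := by
        simp [List.intercalate, List.intersperse]
      rw [hone]
      constructor
      · intro h
        rcases infix_split heW h with h1 | h2
        · have : w = a := h1.eq_of_length (by
            rw [hw, hlens a (by simp)])
          simp [this]
        · exfalso
          have hnil := List.eq_nil_of_infix_nil h2
          rw [hnil] at hw
          simp at hw
          omega
      · intro h
        simp only [List.mem_singleton] at h
        subst h
        exact (List.prefix_append _ _).isInfix
    | cons b rest =>
      have hI : List.intercalate [Base.C] (a :: b :: rest) ++ [e]
          = a ++ Base.C :: (List.intercalate [Base.C] (b :: rest) ++ [e]) := by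
        simp [List.intercalate, List.intersperse_cons_cons]
      rw [hI]
      constructor
      · intro h
        rcases infix_split hCW h with h1 | h2
        · have : w = a := h1.eq_of_length (by rw [hw, hlens a (by simp)])
          simp [this]
        · have := (ih (by simp) (fun x hx => hlens x (List.mem_cons_of_mem _ hx))).mp h2
          exact List.mem_cons_of_mem _ this
      · intro h
        rcases List.mem_cons.mp h with h1 | h1
        · subst h1
          exact (List.prefix_append w _).isInfix
        · have h2 := (ih (by simp) (fun x hx => hlens x (List.mem_cons_of_mem _ hx))).mpr h1
          refine h2.trans ?_
          exact (List.suffix_cons Base.C _).trans (List.suffix_append _ _) |>.isInfix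

theorem stmt1 (l d : ℕ) (hl : 1 ≤ l) (hd : 1 ≤ d)
    (as : List (List Base)) (hlen : as.length = d)
    (hblocks : ∀ a ∈ as, a.length = l ∧ ∀ b ∈ a, b = Base.A ∨ b = Base.T)
    (s : List Base) (hs : s = List.intercalate [Base.C] as)
    (e : Base) (he : e = Base.C ∨ e = Base.G)
    (w : List Base) (hw : w.length = l) (hwAT : ∀ b ∈ w, b = Base.A ∨ b = Base.T) :
    w <:+: (s ++ [e]) ↔ w ∈ as := by
  subst hs
  have heW : e ∉ w := fun hmem => by
    rcases hwAT e hmem with h | h <;> rcases he with h' | h' <;> simp_all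
  have hCW : Base.C ∉ w := fun hmem => by
    rcases hwAT _ hmem with h | h <;> simp_all
  have hne : as ≠ [] := by intro h; subst h; simp at hlen; omega
  exact key l hl w hw e heW hCW as hne (fun a ha => (hblocks a ha).1)
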